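/- arXiv:2206.06504 — 2 statements merged into one kernel-verified Lean document; each statement's English description precedes it below -/
import Mathlib

section
/- For the switch with symmetric covariance σ²·I, the pair L(φ) = (1 − ⟨φ,1_{2n}⟩σ²/2)/∏_{j=1}^{2n}(1 − ⟨φ,d_j⟩σ²/2) and M_{i+n(j-1)}(φ) = (1 − ⟨φ,d_i⟩σ²/2)(1 − ⟨φ,d_{n+j}⟩σ²/2)/(n·∏_{k=1}^{2n}(1 − ⟨φ,d_k⟩σ²/2)) satisfies, for θ = Bφ with all denominators nonzero, (−(1/n)⟨θ,1_{n²}⟩ + (σ²/2)⟨θ,θ⟩)·L(φ) = −Σ_{i,j} θ_{i+n(j-1)}·M_{i+n(j-1)}(φ). -/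
open Matrix

def sqEquiv14 (n : ℕ) (hn : 0 < n) : Fin n × Fin n ≃ Fin (n^2) where
  toFun p := ⟨p.1 + n * p.2, by have := p.1.isLt; have := p.2.isLt; nlinarith⟩
  invFun r := (⟨r % n, Nat.mod_lt _ hn⟩,
    ⟨r / n, by have := r.isLt; exact Nat.div_lt_of_lt_mul (by nlinarith)⟩)
  left_inv p := by
    ext
    · simp [Nat.add_mul_mod_self_left, Nat.mod_eq_of_lt p.1.isLt]
    · simp [Nat.add_mul_div_left _ _ hn, Nat.div_eq_of_lt p.1.isLt]
  right_inv r := by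
    ext
    simp [Nat.mod_add_div]

theorem sqEquiv14_val (n : ℕ) (hn : 0 < n) (i j : Fin n) :
    ((sqEquiv14 n hn (i, j) : Fin (n^2)) : ℕ) = i + n * j := rfl

theorem sqEquiv14_mod (n : ℕ) (hn : 0 < n) (i j : Fin n) :
    ((sqEquiv14 n hn (i, j) : Fin (n^2)) : ℕ) % n = i := by
  rw [sqEquiv14_val, Nat.add_mul_mod_self_left, Nat.mod_eq_of_lt i.isLt]

theorem sqEquiv14_div (n : ℕ) (hn : 0 < n) (i j : Fin n) :
    ((sqEquiv14 n hn (i, j) : Fin (n^2)) : ℕ) / n = j := by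
  rw [sqEquiv14_val, Nat.add_mul_div_left _ _ hn, Nat.div_eq_of_lt i.isLt, Nat.zero_add]

theorem stmt_14 (n : ℕ) (hn : 1 ≤ n) (σ : ℝ) (hσ : 0 < σ)
    (B : Matrix (Fin (n^2)) (Fin (2*n)) ℝ)
    (hB : ∀ (r : Fin (n^2)) (c : Fin (2*n)),
      B r c = if (c : ℕ) = (r : ℕ) % n ∨ (c : ℕ) = n + (r : ℕ) / n then 1 else 0)
    (D : Matrix (Fin (2*n)) (Fin (2*n)) ℝ) (hD : D = Bᵀ * B)
    (φ : Fin (2*n) → ℂ) (θ : Fin (n^2) → ℂ)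
    (hθ : θ = fun r => ∑ c : Fin (2*n), (B r c : ℂ) * φ c)
    (hden : ∀ c : Fin (2*n),
      1 - (∑ k : Fin (2*n), φ k * (D k c : ℂ)) * (σ^2 : ℂ) / 2 ≠ 0)
    (L : ℂ)
    (hL : L = (1 - (∑ k : Fin (2*n), φ k) * (σ^2 : ℂ) / 2)
          / ∏ c : Fin (2*n), (1 - (∑ k : Fin (2*n), φ k * (D k c : ℂ)) * (σ^2 : ℂ) / 2))
    (M : Fin (n^2) → ℂ)
    (hM : ∀ i j : Fin n,
      M ⟨(i : ℕ) + n * (j : ℕ), by have := i.isLt; have := j.isLt; nlinarith⟩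
        = (1 - (∑ k : Fin (2*n), φ k * (D k ⟨(i : ℕ), by have := i.isLt; omega⟩ : ℂ))
              * (σ^2 : ℂ) / 2)
          * (1 - (∑ k : Fin (2*n), φ k * (D k ⟨n + (j : ℕ), by have := j.isLt; omega⟩ : ℂ))
              * (σ^2 : ℂ) / 2)
          / ((n : ℂ) * ∏ c : Fin (2*n),
              (1 - (∑ k : Fin (2*n), φ k * (D k c : ℂ)) * (σ^2 : ℂ) / 2))) :
    (-((n : ℂ))⁻¹ * (∑ r : Fin (n^2), θ r)
        + (σ^2 : ℂ) / 2 * ∑ r : Fin (n^2), θ r * θ r) * L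
      = - ∑ i : Fin n, ∑ j : Fin n,
          θ ⟨(i : ℕ) + n * (j : ℕ), by have := i.isLt; have := j.isLt; nlinarith⟩
          * M ⟨(i : ℕ) + n * (j : ℕ), by have := i.isLt; have := j.isLt; nlinarith⟩ := by
  have hnpos : 0 < n := hn
  have hn0 : (n:ℂ) ≠ 0 := Nat.cast_ne_zero.mpr (by omega)
  set P : ℂ := ∏ c : Fin (2*n), (1 - (∑ k : Fin (2*n), φ k * (D k c : ℂ)) * (σ^2 : ℂ) / 2)
    with hPdef
  have hP : P ≠ 0 := Finset.prod_ne_zero_iff.mpr fun c _ => hden c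
  set e := sqEquiv14 n hnpos with hedef
  set x : Fin n → ℂ := fun i => φ ⟨(i:ℕ), by have := i.isLt; omega⟩ with hxdef
  set y : Fin n → ℂ := fun j => φ ⟨n + (j:ℕ), by have := j.isLt; omega⟩ with hydef
  set S1 : ℂ := ∑ i, x i with hS1
  set S2 : ℂ := ∑ j, y j with hS2
  set Qx : ℂ := ∑ i, x i * x i with hQx
  set Qy : ℂ := ∑ j, y j * y j with hQy
  clear_value P x y S1 S2 Qx Qy
  -- θ on pairs
  have hθ' : ∀ i j : Fin n, θ (e (i, j)) = x i + y j := by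
    intro i j
    simp only [hθ]
    have hBe : ∀ c : Fin (2*n), (B (e (i,j)) c : ℂ) * φ c
        = (if c = (⟨(i:ℕ), by have := i.isLt; omega⟩ : Fin (2*n)) then φ c else 0)
          + (if c = (⟨n + (j:ℕ), by have := j.isLt; omega⟩ : Fin (2*n)) then φ c else 0) := by
      intro c
      rw [hB, hedef, sqEquiv14_mod, sqEquiv14_div]
      have hi := i.isLt
      by_cases h1 : (c:ℕ) = (i:ℕ) <;> by_cases h2 : (c:ℕ) = n + (j:ℕ) <;>
        simp [h1, h2, Fin.ext_iff] <;> omega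
    rw [Finset.sum_congr rfl fun c _ => hBe c, Finset.sum_add_distrib]
    simp [Finset.sum_ite_eq', hxdef, hydef]
  -- rewrite column sums of D
  have hawB : ∀ c : Fin (2*n), (∑ k : Fin (2*n), φ k * (D k c : ℂ))
      = ∑ r : Fin (n^2), θ r * (B r c : ℂ) := by
    intro c
    simp only [hθ, hD, Matrix.mul_apply, Matrix.transpose_apply]
    push_cast
    simp only [Finset.mul_sum, Finset.sum_mul]
    rw [Finset.sum_comm]
    exact Finset.sum_congr rfl fun r _ => Finset.sum_congr rfl fun k _ => by ring
  have ha1 : ∀ i : Fin n,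
      (∑ k : Fin (2*n), φ k * (D k (⟨(i:ℕ), by have := i.isLt; omega⟩ : Fin (2*n)) : ℂ))
      = (n:ℂ) * x i + S2 := by
    intro i
    rw [hawB, ← Equiv.sum_comp e (fun r => θ r * (B r ⟨(i:ℕ), by have := i.isLt; omega⟩ : ℂ)),
      Fintype.sum_prod_type]
    have hterm : ∀ i' j : Fin n,
        θ (e (i', j)) * (B (e (i', j)) ⟨(i:ℕ), by have := i.isLt; omega⟩ : ℂ)
        = if i' = i then x i' + y j else 0 := by
      intro i' j
      rw [hθ' i' j, hB, hedef, sqEquiv14_mod, sqEquiv14_div]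
      have hi := i.isLt
      by_cases h : (i':ℕ) = (i:ℕ)
      · have hii : i' = i := Fin.ext h
        subst hii
        simp
      · have h2 : ¬(((⟨(i:ℕ), by have := i.isLt; omega⟩ : Fin (2*n)) : ℕ) = (i':ℕ)
            ∨ ((⟨(i:ℕ), by have := i.isLt; omega⟩ : Fin (2*n)) : ℕ) = n + (j:ℕ)) := by
          simp only [Fin.val_mk]
          omega
        rw [if_neg h2, if_neg (fun hh => h (congrArg Fin.val hh))]
        simp
    rw [Finset.sum_congr rfl fun i' _ => Finset.sum_congr rfl fun j _ => hterm i' j]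
    rw [Finset.sum_comm]
    simp only [Finset.sum_ite_eq', Finset.mem_univ, if_true]
    rw [Finset.sum_add_distrib, Finset.sum_const, Finset.card_univ, Fintype.card_fin,
      nsmul_eq_mul, ← hS2]
  have ha2 : ∀ j : Fin n,
      (∑ k : Fin (2*n), φ k * (D k (⟨n + (j:ℕ), by have := j.isLt; omega⟩ : Fin (2*n)) : ℂ))
      = S1 + (n:ℂ) * y j := by
    intro j
    rw [hawB, ← Equiv.sum_comp e (fun r => θ r * (B r ⟨n + (j:ℕ), by have := j.isLt; omega⟩ : ℂ)),
      Fintype.sum_prod_type]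
    have hterm : ∀ i' j' : Fin n,
        θ (e (i', j')) * (B (e (i', j')) ⟨n + (j:ℕ), by have := j.isLt; omega⟩ : ℂ)
        = if j' = j then x i' + y j' else 0 := by
      intro i' j'
      rw [hθ' i' j', hB, hedef, sqEquiv14_mod, sqEquiv14_div]
      have hi := i'.isLt
      by_cases h : (j':ℕ) = (j:ℕ)
      · have hjj : j' = j := Fin.ext h
        subst hjj
        simp
      · have h2 : ¬(((⟨n + (j:ℕ), by have := j.isLt; omega⟩ : Fin (2*n)) : ℕ) = (i':ℕ)
            ∨ ((⟨n + (j:ℕ), by have := j.isLt; omega⟩ : Fin (2*n)) : ℕ) = n + (j':ℕ)) := by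
          simp only [Fin.val_mk]
          omega
        rw [if_neg h2, if_neg (fun hh => h (congrArg Fin.val hh))]
        simp
    rw [Finset.sum_congr rfl fun i' _ => Finset.sum_congr rfl fun j' _ => hterm i' j']
    simp only [Finset.sum_ite_eq', Finset.mem_univ, if_true]
    rw [Finset.sum_add_distrib, Finset.sum_const, Finset.card_univ, Fintype.card_fin,
      nsmul_eq_mul, ← hS1]
  -- total sum of φ
  have hS : (∑ k : Fin (2*n), φ k) = S1 + S2 := by
    simp only [hS1, hS2, hxdef, hydef]
    rw [← Equiv.sum_comp (finSumFinEquiv.trans (finCongr (by omega : n + n = 2*n))) φ,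
      Fintype.sum_sum_type]
    congr 1
  -- sums of θ
  have hT1 : (∑ r : Fin (n^2), θ r) = (n:ℂ) * S1 + (n:ℂ) * S2 := by
    rw [← Equiv.sum_comp e θ, Fintype.sum_prod_type]
    rw [Finset.sum_congr rfl fun i _ => Finset.sum_congr rfl fun j _ => hθ' i j]
    have hrow : ∀ i : Fin n, ∑ j : Fin n, (x i + y j) = (n:ℂ) * x i + S2 := by
      intro i
      rw [Finset.sum_add_distrib, Finset.sum_const, Finset.card_univ, Fintype.card_fin,
        nsmul_eq_mul, ← hS2]
    rw [Finset.sum_congr rfl fun i _ => hrow i, Finset.sum_add_distrib, ← Finset.mul_sum,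
      ← hS1, Finset.sum_const, Finset.card_univ, Fintype.card_fin, nsmul_eq_mul]
    try ring
  have hT2 : (∑ r : Fin (n^2), θ r * θ r)
      = (n:ℂ) * Qx + (n:ℂ) * Qy + 2 * S1 * S2 := by
    rw [← Equiv.sum_comp e (fun r => θ r * θ r), Fintype.sum_prod_type]
    have hrow : ∀ i : Fin n, ∑ j : Fin n, θ (e (i, j)) * θ (e (i, j))
        = (n:ℂ) * (x i * x i) + (2 * x i) * S2 + Qy := by
      intro i
      rw [Finset.sum_congr rfl fun j _ =>
        (by rw [hθ' i j]; ring :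
          θ (e (i, j)) * θ (e (i, j)) = x i * x i + (2 * x i) * y j + y j * y j)]
      rw [Finset.sum_add_distrib, Finset.sum_add_distrib, ← hQy,
        (Finset.mul_sum Finset.univ y (2 * x i)).symm, ← hS2,
        Finset.sum_const, Finset.card_univ, Fintype.card_fin, nsmul_eq_mul]
      try ring
    rw [Finset.sum_congr rfl fun i _ => hrow i, Finset.sum_add_distrib, Finset.sum_add_distrib,
      (Finset.mul_sum Finset.univ (fun i => x i * x i) ((n:ℂ))).symm, ← hQx,
      (Finset.sum_mul Finset.univ (fun i => 2 * x i) S2).symm,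
      (Finset.mul_sum Finset.univ x (2:ℂ)).symm, ← hS1,
      Finset.sum_const, Finset.card_univ, Fintype.card_fin, nsmul_eq_mul]
    ring
  -- single sums with the A/C factors
  have hA1 : (∑ i : Fin n, (1 - ((n:ℂ) * x i + S2) * (σ^2:ℂ) / 2))
      = (n:ℂ) - ((n:ℂ) * S1 + (n:ℂ) * S2) * (σ^2:ℂ) / 2 := by
    rw [Finset.sum_congr rfl fun i _ =>
      (by ring : (1 - ((n:ℂ) * x i + S2) * (σ^2:ℂ) / 2)
        = 1 + (-((n:ℂ) * (σ^2:ℂ) / 2)) * x i + (-(S2 * (σ^2:ℂ) / 2)))]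
    rw [Finset.sum_add_distrib, Finset.sum_add_distrib, ← Finset.mul_sum, ← hS1,
      Finset.sum_const, Finset.sum_const, Finset.card_univ, Fintype.card_fin,
      nsmul_eq_mul, nsmul_eq_mul]
    ring
  have hXA : (∑ i : Fin n, x i * (1 - ((n:ℂ) * x i + S2) * (σ^2:ℂ) / 2))
      = S1 - ((n:ℂ) * Qx + S1 * S2) * (σ^2:ℂ) / 2 := by
    rw [Finset.sum_congr rfl fun i _ =>
      (by ring : x i * (1 - ((n:ℂ) * x i + S2) * (σ^2:ℂ) / 2)
        = x i + (-((n:ℂ) * (σ^2:ℂ) / 2)) * (x i * x i) + (-(S2 * (σ^2:ℂ) / 2)) * x i)]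
    rw [Finset.sum_add_distrib, Finset.sum_add_distrib, ← Finset.mul_sum, ← Finset.mul_sum,
      ← hS1, ← hQx]
    ring
  have hC1 : (∑ j : Fin n, (1 - (S1 + (n:ℂ) * y j) * (σ^2:ℂ) / 2))
      = (n:ℂ) - ((n:ℂ) * S1 + (n:ℂ) * S2) * (σ^2:ℂ) / 2 := by
    rw [Finset.sum_congr rfl fun j _ =>
      (by ring : (1 - (S1 + (n:ℂ) * y j) * (σ^2:ℂ) / 2)
        = 1 + (-((n:ℂ) * (σ^2:ℂ) / 2)) * y j + (-(S1 * (σ^2:ℂ) / 2)))]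
    rw [Finset.sum_add_distrib, Finset.sum_add_distrib, ← Finset.mul_sum, ← hS2,
      Finset.sum_const, Finset.sum_const, Finset.card_univ, Fintype.card_fin,
      nsmul_eq_mul, nsmul_eq_mul]
    ring
  have hYC : (∑ j : Fin n, y j * (1 - (S1 + (n:ℂ) * y j) * (σ^2:ℂ) / 2))
      = S2 - ((n:ℂ) * Qy + S1 * S2) * (σ^2:ℂ) / 2 := by
    rw [Finset.sum_congr rfl fun j _ =>
      (by ring : y j * (1 - (S1 + (n:ℂ) * y j) * (σ^2:ℂ) / 2)
        = y j + (-((n:ℂ) * (σ^2:ℂ) / 2)) * (y j * y j) + (-(S1 * (σ^2:ℂ) / 2)) * y j)]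
    rw [Finset.sum_add_distrib, Finset.sum_add_distrib, ← Finset.mul_sum, ← Finset.mul_sum,
      ← hS2, ← hQy]
    ring
  -- rewrite each RHS term
  have hterm : ∀ i j : Fin n,
      θ (⟨(i:ℕ) + n * (j:ℕ), by have := i.isLt; have := j.isLt; nlinarith⟩ : Fin (n^2))
      * M (⟨(i:ℕ) + n * (j:ℕ), by have := i.isLt; have := j.isLt; nlinarith⟩ : Fin (n^2))
      = (x i + y j) * ((1 - ((n:ℂ) * x i + S2) * (σ^2:ℂ) / 2)
          * (1 - (S1 + (n:ℂ) * y j) * (σ^2:ℂ) / 2)) / ((n:ℂ) * P) := by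
    intro i j
    have h1 : θ (⟨(i:ℕ) + n * (j:ℕ), by have := i.isLt; have := j.isLt; nlinarith⟩ : Fin (n^2))
        = x i + y j := hθ' i j
    have h2 : M (⟨(i:ℕ) + n * (j:ℕ), by have := i.isLt; have := j.isLt; nlinarith⟩ : Fin (n^2))
        = (1 - ((n:ℂ) * x i + S2) * (σ^2:ℂ) / 2)
          * (1 - (S1 + (n:ℂ) * y j) * (σ^2:ℂ) / 2) / ((n:ℂ) * P) := by
      rw [hM i j, ha1 i, ha2 j]
    rw [h1, h2]
    ring
  rw [hL, hS, hT1, hT2]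
  rw [Finset.sum_congr rfl fun i _ => Finset.sum_congr rfl fun j _ => hterm i j]
  -- split the double sum
  have hinner : ∀ i : Fin n,
      (∑ j : Fin n, (x i + y j) * ((1 - ((n:ℂ) * x i + S2) * (σ^2:ℂ) / 2)
          * (1 - (S1 + (n:ℂ) * y j) * (σ^2:ℂ) / 2)) / ((n:ℂ) * P))
      = (x i * (1 - ((n:ℂ) * x i + S2) * (σ^2:ℂ) / 2)
            * ((n:ℂ) - ((n:ℂ) * S1 + (n:ℂ) * S2) * (σ^2:ℂ) / 2)
          + (1 - ((n:ℂ) * x i + S2) * (σ^2:ℂ) / 2)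
            * (S2 - ((n:ℂ) * Qy + S1 * S2) * (σ^2:ℂ) / 2)) / ((n:ℂ) * P) := by
    intro i
    rw [← Finset.sum_div]
    congr 1
    rw [← hC1, ← hYC, Finset.mul_sum, Finset.mul_sum, ← Finset.sum_add_distrib]
    exact Finset.sum_congr rfl fun j _ => by ring
  have hsum2 : (∑ i : Fin n, (x i * (1 - ((n:ℂ) * x i + S2) * (σ^2:ℂ) / 2)
            * ((n:ℂ) - ((n:ℂ) * S1 + (n:ℂ) * S2) * (σ^2:ℂ) / 2)
          + (1 - ((n:ℂ) * x i + S2) * (σ^2:ℂ) / 2)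
            * (S2 - ((n:ℂ) * Qy + S1 * S2) * (σ^2:ℂ) / 2)))
      = (S1 - ((n:ℂ) * Qx + S1 * S2) * (σ^2:ℂ) / 2)
          * ((n:ℂ) - ((n:ℂ) * S1 + (n:ℂ) * S2) * (σ^2:ℂ) / 2)
        + ((n:ℂ) - ((n:ℂ) * S1 + (n:ℂ) * S2) * (σ^2:ℂ) / 2)
          * (S2 - ((n:ℂ) * Qy + S1 * S2) * (σ^2:ℂ) / 2) := by
    rw [← hXA, ← hA1]
    try rw [Finset.sum_mul]
    try rw [Finset.sum_mul]
    try rw [← Finset.sum_add_distrib]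
    try exact Finset.sum_congr rfl fun i _ => by ring
  rw [Finset.sum_congr rfl fun i _ => hinner i, ← Finset.sum_div, hsum2]
  have hninv : -((n:ℂ))⁻¹ * ((n:ℂ) * S1 + (n:ℂ) * S2) = -(S1 + S2) := by
    field_simp
  rw [hninv, ← mul_div_assoc, ← neg_div, div_eq_div_iff hP (mul_ne_zero hn0 hP)]
  ring
end

section
/- Let γ > 0 and define L(φ) = 1/((1−φ₁)(1−(φ₁+φ₂)/(2γ))), M₁(φ) = 1/(1−(φ₁+φ₂)/(2γ)), M₂(φ) = 1/(1−φ₁). Then for all φ₁, φ₂ ∈ ℂ at which the denominators are nonzero, L(φ)·((1−2γ)φ₂ + φ₂² − φ₁ + φ₁²) + (φ₁−φ₂)·M₁(φ) + 2γφ₂·M₂(φ) = 0. -/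
theorem stmt_15 (γ : ℝ) (hγ : 0 < γ) (φ₁ φ₂ : ℂ)
    (h₁ : 1 - φ₁ ≠ 0) (h₂ : 1 - (φ₁ + φ₂) / (2 * (γ : ℂ)) ≠ 0)
    (L M₁ M₂ : ℂ)
    (hL : L = 1 / ((1 - φ₁) * (1 - (φ₁ + φ₂) / (2 * (γ : ℂ)))))
    (hM₁ : M₁ = 1 / (1 - (φ₁ + φ₂) / (2 * (γ : ℂ))))
    (hM₂ : M₂ = 1 / (1 - φ₁)) :
    L * ((1 - 2 * (γ : ℂ)) * φ₂ + φ₂^2 - φ₁ + φ₁^2)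
      + (φ₁ - φ₂) * M₁ + 2 * (γ : ℂ) * φ₂ * M₂ = 0 := by
  have hγ' : (γ : ℂ) ≠ 0 := by exact_mod_cast hγ.ne'
  set b : ℂ := 1 - (φ₁ + φ₂) / (2 * (γ : ℂ)) with hb
  have hM₁' : M₁ = L * (1 - φ₁) := by
    rw [hM₁, hL]; field_simp
  have hM₂' : M₂ = L * b := by
    rw [hM₂, hL]; field_simp
  rw [hM₁', hM₂']
  have key : (1 - 2 * (γ : ℂ)) * φ₂ + φ₂^2 - φ₁ + φ₁^2
      + (φ₁ - φ₂) * (1 - φ₁) + 2 * (γ : ℂ) * φ₂ * b = 0 := by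
    rw [hb]; field_simp; ring
  calc L * ((1 - 2 * (γ : ℂ)) * φ₂ + φ₂^2 - φ₁ + φ₁^2)
      + (φ₁ - φ₂) * (L * (1 - φ₁)) + 2 * (γ : ℂ) * φ₂ * (L * b)
      = L * ((1 - 2 * (γ : ℂ)) * φ₂ + φ₂^2 - φ₁ + φ₁^2
        + (φ₁ - φ₂) * (1 - φ₁) + 2 * (γ : ℂ) * φ₂ * b) := by ring
    _ = 0 := by rw [key, mul_zero]
end
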